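/- Under the MHR assumption, the threshold function λ is continuous on T, λ(t̲) > q̲, and λ(t̄) < q̄. Consequently, with t1 = inf{t ∈ T : λ(t) < q̄} and t2 = sup{t ∈ T : λ(t) > q̲}, one has t̲ ≤ t1 < t2 ≤ t̄. -/
import Mathlib


open MeasureTheory Set

theorem stmt_4
    (tlo thi qlo qhi : ℝ) (htT : tlo < thi) (hqQ : qlo < qhi)
    (F f d : ℝ → ℝ)
    (hF : ∀ t ∈ Icc tlo thi, HasDerivAt F (f t) t)
    (hfpos : ∀ t ∈ Icc tlo thi, 0 < f t)
    (hF0 : F tlo = 0) (hF1 : F thi = 1)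
    (hdDef : ∀ t ∈ Icc tlo thi, d t = (1 - F t) / f t)
    (d' : ℝ → ℝ)
    (hdDeriv : ∀ t ∈ Icc tlo thi, HasDerivAt d (d' t) t)
    (hMHR : ∀ t ∈ Icc tlo thi, d' t ≤ 0)
    (α α' : ℝ → ℝ)
    (hα : ∀ q ∈ Icc qlo qhi, HasDerivAt α (α' q) q)
    (hαpos : ∀ q ∈ Icc qlo qhi, 0 < α q)
    (hα'pos : ∀ q ∈ Icc qlo qhi, 0 < α' q)
    (r : ℝ) (hr : 0 < r)
    (hlow : α qlo * tlo < r) (hhigh : r < α qhi * thi)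
    (η : ℝ → ℝ → ℝ)
    (hη : ∀ q t, η q t = α q * (t - d t) - r)
    (lam : ℝ → ℝ)
    (hlamQ : ∀ t ∈ Icc tlo thi, lam t ∈ Icc qlo qhi)
    (hlamLo : ∀ t ∈ Icc tlo thi, (∀ q ∈ Icc qlo qhi, 0 < η q t) → lam t = qlo)
    (hlamMid : ∀ t ∈ Icc tlo thi, ∀ q0 ∈ Icc qlo qhi, η q0 t = 0 → lam t = q0)
    (hlamHi : ∀ t ∈ Icc tlo thi, (∀ q ∈ Icc qlo qhi, η q t < 0) → lam t = qhi)
    :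
    ContinuousOn lam (Icc tlo thi) ∧ qlo < lam tlo ∧ lam thi < qhi ∧
      (tlo ≤ sInf {t ∈ Icc tlo thi | lam t < qhi} ∧
        sInf {t ∈ Icc tlo thi | lam t < qhi} < sSup {t ∈ Icc tlo thi | qlo < lam t} ∧
        sSup {t ∈ Icc tlo thi | qlo < lam t} ≤ thi) :=  by
  have htloI : tlo ∈ Icc tlo thi := left_mem_Icc.2 htT.le
  have hthiI : thi ∈ Icc tlo thi := right_mem_Icc.2 htT.le
  have hqloI : qlo ∈ Icc qlo qhi := left_mem_Icc.2 hqQ.le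
  have hqhiI : qhi ∈ Icc qlo qhi := right_mem_Icc.2 hqQ.le
  have hdc : ∀ t ∈ Icc tlo thi, ContinuousAt d t := fun t ht => (hdDeriv t ht).continuousAt
  have hαc : ContinuousOn α (Icc qlo qhi) := fun q hq => (hα q hq).continuousAt.continuousWithinAt
  have hαm : StrictMonoOn α (Icc qlo qhi) := by
    apply strictMonoOn_of_deriv_pos (convex_Icc _ _) hαc
    intro x hx
    rw [interior_Icc] at hx
    rw [(hα x (Ioo_subset_Icc_self hx)).deriv]
    exact hα'pos x (Ioo_subset_Icc_self hx)
  -- trichotomy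
  have tri : ∀ t ∈ Icc tlo thi, (∀ q ∈ Icc qlo qhi, 0 < η q t) ∨
      (∃ q0 ∈ Icc qlo qhi, η q0 t = 0) ∨ (∀ q ∈ Icc qlo qhi, η q t < 0) := by
    intro t ht
    by_cases hc0 : t - d t ≤ 0
    · right; right
      intro q hq
      rw [hη]
      nlinarith [hαpos q hq]
    · push_neg at hc0
      by_cases h1 : 0 < η qlo t
      · left
        intro q hq
        rw [hη] at h1 ⊢
        have : α qlo ≤ α q := hαm.monotoneOn hqloI hq hq.1
        nlinarith
      · by_cases h2 : η qhi t < 0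
        · right; right
          intro q hq
          rw [hη] at h2 ⊢
          have : α q ≤ α qhi := hαm.monotoneOn hq hqhiI hq.2
          nlinarith
        · right; left
          push_neg at h1 h2
          have hcont : ContinuousOn (fun q => η q t) (Icc qlo qhi) := by
            have he : (fun q => η q t) = fun q => α q * (t - d t) - r := funext fun q => hη q t
            rw [he]
            exact (hαc.mul continuousOn_const).sub continuousOn_const
          have h0 : (0:ℝ) ∈ Icc (η qlo t) (η qhi t) := ⟨h1, h2⟩
          obtain ⟨q0, hq0, hq0eq⟩ := intermediate_value_Icc hqQ.le hcont h0
          exact ⟨q0, hq0, hq0eq⟩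
  -- characterization
  have hchar : ∀ t ∈ Icc tlo thi,
      (∀ q ∈ Icc qlo qhi, q < lam t → η q t < 0) ∧ (∀ q ∈ Icc qlo qhi, lam t < q → 0 < η q t) := by
    intro t ht
    rcases tri t ht with h | ⟨q0, hq0, hq0eq⟩ | h
    · have hl := hlamLo t ht h
      refine ⟨?_, fun q hq _ => h q hq⟩
      intro q hq hlt
      rw [hl] at hlt
      exact absurd hq.1 (not_le.2 hlt)
    · have hl := hlamMid t ht q0 hq0 hq0eq
      have hcpos : 0 < t - d t := by
        by_contra hcn
        push_neg at hcn
        rw [hη] at hq0eq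
        nlinarith [hαpos q0 hq0]
      constructor
      · intro q hq hlt
        rw [hl] at hlt
        have hαlt : α q < α q0 := hαm hq hq0 hlt
        rw [hη] at hq0eq ⊢
        nlinarith
      · intro q hq hlt
        rw [hl] at hlt
        have hαlt : α q0 < α q := hαm hq0 hq hlt
        rw [hη] at hq0eq ⊢
        nlinarith
    · have hl := hlamHi t ht h
      refine ⟨fun q hq _ => h q hq, ?_⟩
      intro q hq hlt
      rw [hl] at hlt
      exact absurd hq.2 (not_le.2 hlt)
  -- continuity in t of η q ·
  have hηct : ∀ q, ∀ t0 ∈ Icc tlo thi, ContinuousAt (fun t => η q t) t0 := by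
    intro q t0 ht0
    have he : (fun t => η q t) = fun t => α q * (t - d t) - r := funext fun t => hη q t
    rw [he]
    exact (continuousAt_const.mul (continuousAt_id.sub (hdc t0 ht0))).sub continuousAt_const
  -- continuity of lam
  have hlamc : ContinuousOn lam (Icc tlo thi) := by
    intro t0 ht0
    rw [ContinuousWithinAt, tendsto_order]
    constructor
    · intro a ha
      by_cases hq : qlo < lam t0
      · set qm := max ((a + lam t0)/2) qlo with hqmdef
        have hqm1 : a < qm := lt_max_of_lt_left (by linarith)
        have hqm2 : qm < lam t0 := max_lt (by linarith) hq
        have hqmI : qm ∈ Icc qlo qhi := ⟨le_max_right _ _, le_trans hqm2.le (hlamQ t0 ht0).2⟩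
        have hneg : η qm t0 < 0 := (hchar t0 ht0).1 qm hqmI hqm2
        have hev : ∀ᶠ t in nhds t0, η qm t < 0 :=
          Filter.Tendsto.eventually_lt_const hneg (hηct qm t0 ht0)
        filter_upwards [hev.filter_mono nhdsWithin_le_nhds, eventually_mem_nhdsWithin]
          with t hηt htI
        by_contra hcon
        push_neg at hcon
        have hlt : lam t < qm := lt_of_le_of_lt hcon hqm1
        have := (hchar t htI).2 qm hqmI hlt
        linarith
      · push_neg at hq
        have hl0 : lam t0 = qlo := le_antisymm hq (hlamQ t0 ht0).1
        filter_upwards [eventually_mem_nhdsWithin] with t htI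
        calc a < lam t0 := ha
        _ = qlo := hl0
        _ ≤ lam t := (hlamQ t htI).1
    · intro b hb
      by_cases hq : lam t0 < qhi
      · set qp := min ((lam t0 + b)/2) qhi with hqpdef
        have hqp1 : qp < b := min_lt_of_left_lt (by linarith)
        have hqp2 : lam t0 < qp := lt_min (by linarith) hq
        have hqpI : qp ∈ Icc qlo qhi := ⟨le_trans (hlamQ t0 ht0).1 hqp2.le, min_le_right _ _⟩
        have hpos : 0 < η qp t0 := (hchar t0 ht0).2 qp hqpI hqp2
        have hev : ∀ᶠ t in nhds t0, 0 < η qp t :=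
          Filter.Tendsto.eventually_const_lt hpos (hηct qp t0 ht0)
        filter_upwards [hev.filter_mono nhdsWithin_le_nhds, eventually_mem_nhdsWithin]
          with t hηt htI
        by_contra hcon
        push_neg at hcon
        have hlt : qp < lam t := lt_of_lt_of_le hqp1 hcon
        have := (hchar t htI).1 qp hqpI hlt
        linarith
      · push_neg at hq
        have hl0 : lam t0 = qhi := le_antisymm (hlamQ t0 ht0).2 hq
        filter_upwards [eventually_mem_nhdsWithin] with t htI
        calc lam t ≤ qhi := (hlamQ t htI).2
        _ = lam t0 := hl0.symm
        _ < b := hb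
  -- endpoint facts
  have hdtlo : 0 < d tlo := by
    have hf := hfpos tlo htloI
    rw [hdDef tlo htloI, hF0, sub_zero]
    exact div_pos one_pos hf
  have hηlo : η qlo tlo < 0 := by
    rw [hη]
    have h1 := hαpos qlo hqloI
    by_cases hc : tlo - d tlo ≤ 0
    · nlinarith
    · push_neg at hc
      nlinarith
  have hlamtlo : qlo < lam tlo := by
    rcases tri tlo htloI with h | ⟨q0, hq0, hq0eq⟩ | h
    · exact absurd (h qlo hqloI) (by linarith)
    · rw [hlamMid tlo htloI q0 hq0 hq0eq]
      rcases eq_or_lt_of_le hq0.1 with he | hl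
      · rw [← he] at hq0eq; linarith
      · exact hl
    · rw [hlamHi tlo htloI h]; exact hqQ
  have hdthi : d thi = 0 := by
    rw [hdDef thi hthiI, hF1]; simp
  have hηhi : 0 < η qhi thi := by
    rw [hη, hdthi, sub_zero]; linarith
  have hlamthi : lam thi < qhi := by
    rcases tri thi hthiI with h | ⟨q0, hq0, hq0eq⟩ | h
    · rw [hlamLo thi hthiI h]; exact hqQ
    · rw [hlamMid thi hthiI q0 hq0 hq0eq]
      rcases eq_or_lt_of_le hq0.2 with he | hl
      · rw [he] at hq0eq; linarith
      · exact hl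
    · exact absurd (h qhi hqhiI) (by linarith)
  -- the inf/sup part
  have hthiS1 : thi ∈ {t ∈ Icc tlo thi | lam t < qhi} := ⟨hthiI, hlamthi⟩
  have htloS2 : tlo ∈ {t ∈ Icc tlo thi | qlo < lam t} := ⟨htloI, hlamtlo⟩
  have hS1bdd : BddBelow {t ∈ Icc tlo thi | lam t < qhi} := ⟨tlo, fun x hx => hx.1.1⟩
  have hS2bdd : BddAbove {t ∈ Icc tlo thi | qlo < lam t} := ⟨thi, fun x hx => hx.1.2⟩
  have ht1lo : tlo ≤ sInf {t ∈ Icc tlo thi | lam t < qhi} :=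
    le_csInf ⟨thi, hthiS1⟩ (fun x hx => hx.1.1)
  have ht1hi : sInf {t ∈ Icc tlo thi | lam t < qhi} ≤ thi := csInf_le hS1bdd hthiS1
  have ht2hi : sSup {t ∈ Icc tlo thi | qlo < lam t} ≤ thi :=
    csSup_le ⟨tlo, htloS2⟩ (fun x hx => hx.1.2)
  have ht1I : sInf {t ∈ Icc tlo thi | lam t < qhi} ∈ Icc tlo thi := ⟨ht1lo, ht1hi⟩
  set t1 := sInf {t ∈ Icc tlo thi | lam t < qhi} with ht1def
  -- t1 < thi
  have hne1 : (nhdsWithin thi (Ico tlo thi)).NeBot := by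
    apply mem_closure_iff_nhdsWithin_neBot.mp
    rw [closure_Ico htT.ne]
    exact hthiI
  have htdthi : Filter.Tendsto lam (nhdsWithin thi (Icc tlo thi)) (nhds (lam thi)) :=
    hlamc thi hthiI
  have hev1 : ∀ᶠ t in nhdsWithin thi (Ico tlo thi), lam t < qhi :=
    (Filter.Tendsto.eventually_lt_const hlamthi htdthi).filter_mono
      (nhdsWithin_mono _ Ico_subset_Icc_self)
  have ht1lt : t1 < thi := by
    obtain ⟨t, hlt, htI⟩ := (hev1.and eventually_mem_nhdsWithin).exists
    exact lt_of_le_of_lt (csInf_le hS1bdd ⟨Ico_subset_Icc_self htI, hlt⟩) htI.2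
  -- qlo < lam t1
  have hlamt1 : qlo < lam t1 := by
    rcases eq_or_lt_of_le ht1lo with he | hl
    · rw [← he]; exact hlamtlo
    · by_contra hcon
      push_neg at hcon
      have hlt : lam t1 < qhi := lt_of_le_of_lt hcon hqQ
      have hne : (nhdsWithin t1 (Ico tlo t1)).NeBot := by
        apply mem_closure_iff_nhdsWithin_neBot.mp
        rw [closure_Ico hl.ne]
        exact ⟨hl.le, le_refl _⟩
      have hsub : Ico tlo t1 ⊆ Icc tlo thi := fun x hx => ⟨hx.1, le_trans hx.2.le ht1hi⟩
      have htd : Filter.Tendsto lam (nhdsWithin t1 (Icc tlo thi)) (nhds (lam t1)) :=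
        hlamc t1 ht1I
      have hev : ∀ᶠ t in nhdsWithin t1 (Ico tlo t1), lam t < qhi :=
        (Filter.Tendsto.eventually_lt_const hlt htd).filter_mono (nhdsWithin_mono _ hsub)
      obtain ⟨t, hlt', htI⟩ := (hev.and eventually_mem_nhdsWithin).exists
      exact absurd (csInf_le hS1bdd ⟨hsub htI, hlt'⟩) (not_le.2 htI.2)
  -- t1 < sSup S2
  have ht1lt2 : t1 < sSup {t ∈ Icc tlo thi | qlo < lam t} := by
    have hne : (nhdsWithin t1 (Ioc t1 thi)).NeBot := by
      apply mem_closure_iff_nhdsWithin_neBot.mp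
      rw [closure_Ioc ht1lt.ne]
      exact ⟨le_refl _, ht1lt.le⟩
    have hsub : Ioc t1 thi ⊆ Icc tlo thi := fun x hx => ⟨le_trans ht1lo hx.1.le, hx.2⟩
    have htd : Filter.Tendsto lam (nhdsWithin t1 (Icc tlo thi)) (nhds (lam t1)) :=
      hlamc t1 ht1I
    have hev : ∀ᶠ t in nhdsWithin t1 (Ioc t1 thi), qlo < lam t :=
      (Filter.Tendsto.eventually_const_lt hlamt1 htd).filter_mono (nhdsWithin_mono _ hsub)
    obtain ⟨t, hlt', htI⟩ := (hev.and eventually_mem_nhdsWithin).exists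
    exact lt_of_lt_of_le htI.1 (le_csSup hS2bdd ⟨hsub htI, hlt'⟩)
  exact ⟨hlamc, hlamtlo, hlamthi, ht1lo, ht1lt2, ht2hi⟩
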